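/- Let 0 < α < 1, h > 0, and j₀ < j₁ integers. If u : ℤ → ℝ is bounded, (δ_right)^α u(j) ≥ 0 for all j₀ ≤ j < j₁, and u(j) ≥ 0 for all j ≥ j₁, then u(j) ≥ 0 for all j ≥ j₀. -/

import Mathlib

open Real

/-- The generalized binomial coefficient `(α choose m) = α(α−1)⋯(α−m+1)/m!`. -/
noncomputable def rchoose (α : ℝ) (m : ℕ) : ℝ :=
  (∏ i ∈ Finset.range m, (α - i)) / (m.factorial : ℝ)

/-- The kernel `Λ^α(m) = (−1)^m (α choose m)`. -/
noncomputable def Lam (α : ℝ) (m : ℕ) : ℝ := (-1) ^ m * rchoose α m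

/-- The fractional discrete derivative on the mesh `ℤ_h`:
`(δ_right)^α u(n) = h^{-α} ∑_{m=0}^∞ Λ^α(m) u(n+m)`. -/
noncomputable def deltaRightPow (α h : ℝ) (u : ℤ → ℝ) (n : ℤ) : ℝ :=
  h ^ (-α) * ∑' m : ℕ, Lam α m * u (n + (m : ℤ))

lemma Lam_zero (α : ℝ) : Lam α 0 = 1 := by
  simp [Lam, rchoose]

lemma Lam_succ (α : ℝ) (m : ℕ) :
    Lam α (m + 1) = Lam α m * ((m - α) / (m + 1)) := by
  have hm : (m.factorial : ℝ) ≠ 0 := Nat.cast_ne_zero.2 m.factorial_ne_zero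
  have hm1 : ((m : ℝ) + 1) ≠ 0 := by positivity
  simp only [Lam, rchoose, Finset.prod_range_succ, Nat.factorial_succ,
    Nat.cast_mul, Nat.cast_add, Nat.cast_one, pow_succ]
  field_simp
  ring

lemma rchoose_shift (α : ℝ) (N : ℕ) :
    rchoose α (N + 1) = α / (N + 1) * rchoose (α - 1) N := by
  have hm : (N.factorial : ℝ) ≠ 0 := Nat.cast_ne_zero.2 N.factorial_ne_zero
  have hm1 : ((N : ℝ) + 1) ≠ 0 := by positivity
  have hp : ∏ i ∈ Finset.range (N + 1), (α - i)
      = (∏ i ∈ Finset.range N, (α - 1 - i)) * α := by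
    rw [Finset.prod_range_succ']
    simp only [Nat.cast_add, Nat.cast_zero, Nat.cast_one]
    congr 1
    · exact Finset.prod_congr rfl (fun i _ => by ring)
    · ring_nf
  simp only [rchoose, hp, Nat.factorial_succ, Nat.cast_mul, Nat.cast_add, Nat.cast_one]
  field_simp

lemma Lam_shift (α : ℝ) (N : ℕ) :
    Lam α (N + 1) = -(α / (N + 1)) * Lam (α - 1) N := by
  simp only [Lam, rchoose_shift, pow_succ]
  ring

/-- Positivity of `Λ^{α-1}(N)` for `0 < α < 1`. -/
lemma Lam_sub_one_pos (α : ℝ) (hα : 0 < α) (hα1 : α < 1) (N : ℕ) :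
    0 < Lam (α - 1) N := by
  induction N with
  | zero => rw [Lam_zero]; norm_num
  | succ n ih =>
      rw [Lam_succ]
      apply mul_pos ih
      apply div_pos
      · have : α < (n : ℝ) + 1 := lt_of_lt_of_le hα1 (by exact_mod_cast Nat.one_le_iff_ne_zero.2 (Nat.succ_ne_zero n) : (1:ℝ) ≤ n + 1)
        linarith
      · positivity

lemma Lam_neg (α : ℝ) (hα : 0 < α) (hα1 : α < 1) (m : ℕ) :
    Lam α (m + 1) < 0 := by
  rw [Lam_shift]
  have h1 : 0 < α / ((m : ℝ) + 1) := by positivity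
  have h2 := Lam_sub_one_pos α hα hα1 m
  nlinarith

lemma sum_Lam (α : ℝ) (N : ℕ) :
    ∑ m ∈ Finset.range (N + 1), Lam α m = Lam (α - 1) N := by
  induction N with
  | zero => simp [Lam_zero]
  | succ n ih =>
      rw [Finset.sum_range_succ, ih, Lam_shift, Lam_succ]
      field_simp
      ring

lemma summable_negLam (α : ℝ) (hα : 0 < α) (hα1 : α < 1) :
    Summable (fun m : ℕ => -Lam α (m + 1)) := by
  apply summable_of_sum_range_le (c := 1)
  · intro m; have := Lam_neg α hα hα1 m; linarith
  · intro n
    have h : ∑ m ∈ Finset.range (n + 1), Lam α m = Lam (α - 1) n := sum_Lam α n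
    rw [Finset.sum_range_succ'] at h
    have hpos := Lam_sub_one_pos α hα hα1 n
    have : ∑ i ∈ Finset.range n, Lam α (i + 1) = Lam (α - 1) n - Lam α 0 := by linarith
    rw [Finset.sum_neg_distrib, this, Lam_zero]
    linarith

lemma summable_Lam (α : ℝ) (hα : 0 < α) (hα1 : α < 1) : Summable (Lam α) := by
  have h := (summable_negLam α hα hα1).neg
  simp only [neg_neg] at h
  exact (summable_nat_add_iff 1).1 h

lemma summable_f (α : ℝ) (hα : 0 < α) (hα1 : α < 1) (u : ℤ → ℝ) (M : ℝ)
    (hu : ∀ n, |u n| ≤ M) (n : ℤ) :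
    Summable (fun m : ℕ => Lam α m * u (n + (m : ℤ))) := by
  have hM : 0 ≤ M := le_trans (abs_nonneg _) (hu 0)
  have hLam : Summable (fun m : ℕ => |Lam α m|) :=
    summable_abs_iff.2 (summable_Lam α hα hα1)
  apply Summable.of_abs
  apply Summable.of_nonneg_of_le (fun m => abs_nonneg _) _ (hLam.mul_right M)
  intro m
  rw [abs_mul]
  exact mul_le_mul_of_nonneg_left (hu _) (abs_nonneg _)

/-- Key step: if `u ≥ 0` strictly to the right of `j` and the fractional
derivative at `j` is nonnegative, then `u j ≥ 0`. -/
lemma step (α h : ℝ) (hα : 0 < α) (hα1 : α < 1) (hh : 0 < h)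
    (u : ℤ → ℝ) (M : ℝ) (hu : ∀ n, |u n| ≤ M) (j : ℤ)
    (hright : ∀ k, j < k → 0 ≤ u k) (hd : 0 ≤ deltaRightPow α h u j) :
    0 ≤ u j := by
  have hsum := summable_f α hα hα1 u M hu j
  have hpow : 0 < h ^ (-α) := Real.rpow_pos_of_pos hh _
  have htsum : 0 ≤ ∑' m : ℕ, Lam α m * u (j + (m : ℤ)) := by
    have := hd
    unfold deltaRightPow at this
    nlinarith [this]
  rw [Summable.tsum_eq_zero_add hsum] at htsum
  have htail : (∑' m : ℕ, Lam α (m + 1) * u (j + ((m : ℕ) + 1 : ℤ))) ≤ 0 := by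
    apply tsum_nonpos
    intro m
    apply mul_nonpos_of_nonpos_of_nonneg (le_of_lt (Lam_neg α hα hα1 m))
    apply hright
    omega
  simp only [Lam_zero, Nat.cast_zero, add_zero, one_mul] at htsum
  push_cast at htsum
  linarith [htsum, htail]

/-- If `(δ_right)^α u ≥ 0` on `[j₀, j₁)` and `u ≥ 0` on `[j₁, ∞)`, then `u ≥ 0` on `[j₀, ∞)`. -/
theorem nonneg_propagation (α h : ℝ) (hα : 0 < α) (hα1 : α < 1) (hh : 0 < h)
    (j₀ j₁ : ℤ) (hj : j₀ < j₁) (u : ℤ → ℝ) (M : ℝ) (hu : ∀ n, |u n| ≤ M)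
    (hfrac : ∀ j, j₀ ≤ j → j < j₁ → 0 ≤ deltaRightPow α h u j)
    (htail : ∀ j, j₁ ≤ j → 0 ≤ u j) :
    ∀ j, j₀ ≤ j → 0 ≤ u j := by
  have key : ∀ n : ℕ, ∀ j : ℤ, j₀ ≤ j → j₁ - n ≤ j → 0 ≤ u j := by
    intro n
    induction n with
    | zero => intro j _ hj'; exact htail j (by omega)
    | succ n ih =>
        intro j hj0 hj'
        by_cases hcase : j₁ - n ≤ j
        · exact ih j hj0 hcase
        · have hjlt : j < j₁ := by omega
          apply step α h hα hα1 hh u M hu j _ (hfrac j hj0 hjlt)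
          intro k hk
          exact ih k (by omega) (by omega)
  intro j hj0
  exact key (j₁ - j).toNat j hj0 (by omega)
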